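/- In a free group, if x and y are elements such that [x,a]=1 and [y,a]=1 for some a ≠ 1, then [x,y]=1 (transitivity of commutation: centralizers of nontrivial elements are abelian, in fact cyclic). -/

import Mathlib

open FreeGroup

private lemma list_cons_eq_append {β : Type*} :
    ∀ (L : List β) (a : β), a :: L = L ++ [a] → L = List.replicate L.length a
  | [], _, _ => rfl
  | b :: M, a, h => by
    simp only [List.cons_append, List.cons.injEq] at h
    obtain ⟨rfl, h⟩ := h
    simpa [List.replicate_succ] using list_cons_eq_append M a h

private lemma reduce_cons_eq {α : Type*} [DecidableEq α] (x p : α × Bool) (tl : List (α × Bool))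
    (h : FreeGroup.reduce (p :: tl) = p :: tl) (hx : p ≠ (x.1, !x.2)) :
    FreeGroup.reduce (x :: p :: tl) = x :: p :: tl := by
  rw [FreeGroup.reduce.cons, h]
  show (if x.1 = p.1 ∧ x.2 = !p.2 then tl else x :: p :: tl) = x :: p :: tl
  rw [if_neg]
  rintro ⟨h1, h2⟩
  exact hx (Prod.ext h1.symm (by simp [h2]))

private lemma invRev_cons {α : Type*} (x : α × Bool) (w : List (α × Bool)) :
    FreeGroup.invRev (x :: w) = FreeGroup.invRev w ++ [(x.1, !x.2)] := by
  simp [FreeGroup.invRev]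

private lemma key_lemma {α : Type*} [DecidableEq α] (z : FreeGroup α) (g : α) (d : Bool)
    (hhead : z.toWord.head? ≠ some (g, !d))
    (hlast : z.toWord.getLast? ≠ some (g, !d))
    (hcomm : FreeGroup.mk [(g, d)] * z = z * FreeGroup.mk [(g, d)]) :
    z.toWord = List.replicate z.toWord.length (g, d) := by
  obtain hL | ⟨p, tl, hL⟩ : z.toWord = [] ∨ ∃ p tl, z.toWord = p :: tl := by
    cases h : z.toWord with
    | nil => exact Or.inl rfl
    | cons p tl => exact Or.inr ⟨p, tl, rfl⟩
  · simp [hL]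
  have hred : FreeGroup.reduce (p :: tl) = p :: tl := by rw [← hL]; exact z.reduce_toWord
  have hp : p ≠ (g, !d) := by rw [hL] at hhead; simpa using hhead
  -- left side
  have e1 : (FreeGroup.mk [(g, d)] * z).toWord = (g, d) :: p :: tl := by
    conv_lhs => rw [← z.mk_toWord, hL, FreeGroup.mul_mk, List.singleton_append,
      FreeGroup.toWord_mk]
    exact reduce_cons_eq _ _ _ hred hp
  -- right side
  obtain ⟨q, tl2, hQ⟩ : ∃ q tl2, FreeGroup.invRev (p :: tl) = q :: tl2 := by
    cases h : FreeGroup.invRev (p :: tl) with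
    | nil => exact absurd (congrArg List.length h) (by simp [FreeGroup.invRev_length])
    | cons q tl2 => exact ⟨q, tl2, rfl⟩
  have hq : q ≠ (g, d) := by
    intro hqe
    have h1 : (FreeGroup.invRev (p :: tl)).head? = some (g, d) := by rw [hQ, hqe]; rfl
    have h2 : (List.map (fun g : α × Bool => (g.1, !g.2)) (p :: tl)).getLast? = some (g, d) := by
      rw [← List.head?_reverse]; exact h1
    rw [List.getLast?_map] at h2
    rw [hL] at hlast
    apply hlast
    obtain ⟨u, hu1, hu2⟩ := Option.map_eq_some_iff.mp h2
    rw [hu1]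
    obtain ⟨hu3, hu4⟩ := Prod.mk.injEq .. ▸ hu2
    exact congrArg some (Prod.ext hu3 (by simp [← hu4]))
  have hredQ : FreeGroup.reduce (q :: tl2) = q :: tl2 := by
    rw [← hQ, FreeGroup.reduce_invRev, hred]
  have e2 : (z * FreeGroup.mk [(g, d)]).toWord = (p :: tl) ++ [(g, d)] := by
    have hinv : z * FreeGroup.mk [(g, d)] = (FreeGroup.mk [(g, !d)] * z⁻¹)⁻¹ := by
      rw [mul_inv_rev, inv_inv, FreeGroup.inv_mk]
      simp [FreeGroup.invRev]
    rw [hinv, FreeGroup.toWord_inv]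
    have e3 : (FreeGroup.mk [(g, !d)] * z⁻¹).toWord = (g, !d) :: q :: tl2 := by
      conv_lhs => rw [← z.mk_toWord, hL, FreeGroup.inv_mk, hQ, FreeGroup.mul_mk,
        List.singleton_append, FreeGroup.toWord_mk]
      refine reduce_cons_eq _ _ _ hredQ ?_
      simpa using hq
    rw [e3, _root_.invRev_cons, ← hQ, FreeGroup.invRev_invRev]
    simp
  have := e1.symm.trans ((congrArg FreeGroup.toWord hcomm).trans e2)
  rw [hL]
  simpa using list_cons_eq_append (p :: tl) (g, d) this

private lemma eq_one_of_central {α : Type*} [DecidableEq α] {s t : α} (hst : s ≠ t)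
    {z : FreeGroup α} (hz : ∀ w, z * w = w * z) : z = 1 := by
  by_contra hne
  obtain ⟨p, tl, hL⟩ : ∃ p tl, z.toWord = p :: tl := by
    cases h : z.toWord with
    | nil => exact absurd (FreeGroup.toWord_eq_nil_iff.mp h) hne
    | cons p tl => exact ⟨p, tl, rfl⟩
  have hlast' : z.toWord.getLast? = some (z.toWord.getLast (by rw [hL]; simp)) :=
    List.getLast?_eq_getLast _
  set q := z.toWord.getLast (by rw [hL]; simp) with hqdef
  -- choose a good pair (g, d)
  obtain ⟨g, d, hg, hd1, hd2⟩ :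
      ∃ g d, (g = s ∨ g = t) ∧ p ≠ (g, !d) ∧ q ≠ (g, !d) := by
    by_cases h1 : p.1 = s
    · by_cases h2 : q.1 = s
      · exact ⟨t, true, Or.inr rfl, fun he => hst (by rw [← h1, he]),
          fun he => hst (by rw [← h2, he])⟩
      · exact ⟨s, p.2, Or.inl rfl, fun he => by simpa using congrArg Prod.snd he,
          fun he => h2 (by rw [he])⟩
    · by_cases h2 : q.1 = s
      · exact ⟨s, q.2, Or.inl rfl, fun he => h1 (by rw [he]),
          fun he => by simpa using congrArg Prod.snd he⟩
      · exact ⟨s, true, Or.inl rfl, fun he => h1 (by rw [he]), fun he => h2 (by rw [he])⟩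
  have hrep := key_lemma z g d
    (by rw [hL]; simpa using hd1)
    (by rw [hlast']; simpa using hd2)
    ((hz _).symm)
  -- now the other generator
  set g' := if g = s then t else s with hg'
  have hgg' : g' ≠ g := by
    by_cases hgs : g = s
    · rw [hg', if_pos hgs, hgs]; exact hst.symm
    · rw [hg', if_neg hgs]; exact fun he => hgs he.symm
  have hn : z.toWord.length = tl.length + 1 := by rw [hL]; rfl
  have hhead2 : z.toWord.head? = some (g, d) := by
    rw [hrep, hn, List.replicate_succ]; rfl
  have hlast2 : z.toWord.getLast? = some (g, d) := by
    rw [hlast']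
    have : q ∈ z.toWord := hqdef ▸ List.getLast_mem _
    rw [hrep] at this
    rw [List.eq_of_mem_replicate this]
  have hrep2 := key_lemma z g' true
    (by rw [hhead2]
        exact fun hc => hgg' (congrArg Prod.fst (Option.some_injective _ hc)).symm)
    (by rw [hlast2]
        exact fun hc => hgg' (congrArg Prod.fst (Option.some_injective _ hc)).symm)
    ((hz _).symm)
  rw [hrep, hn] at hrep2
  have h1 := congrArg List.head? hrep2
  simp [List.replicate_succ] at h1
  exact hgg' h1.1.symm

private lemma commute_of_subsingleton {α : Type*} [Subsingleton α] (u v : FreeGroup α) :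
    Commute u v := by
  induction u with
  | C1 => exact Commute.one_left _
  | of a =>
    induction v with
    | C1 => exact Commute.one_right _
    | of b => rw [Subsingleton.elim a b]
    | inv_of b h => exact h.inv_right
    | mul b c h1 h2 => exact h1.mul_right h2
  | inv_of a h => exact h.inv_left
  | mul a b h1 h2 => exact h1.mul_left h2

/-- Transitivity of commutation in a free group: if `[x,a] = 1` and `[y,a] = 1`
for some `a ≠ 1`, then `[x,y] = 1`. -/
theorem freeGroup_commutation_transitive {X : Type*} (a x y : FreeGroup X) (ha : a ≠ 1)
    (hx : x⁻¹ * a⁻¹ * x * a = 1) (hy : y⁻¹ * a⁻¹ * y * a = 1) :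
    x⁻¹ * y⁻¹ * x * y = 1 := by
  classical
  have hcomm : ∀ u : FreeGroup X, u⁻¹ * a⁻¹ * u * a = 1 → a * u = u * a := by
    intro u hu
    have h3 := congrArg (u * ·) hu
    have h2 : a⁻¹ * u * a = u := by simpa [← mul_assoc] using h3
    have h4 : a * (a⁻¹ * u * a) = a * u := by rw [h2]
    rw [mul_assoc, mul_inv_cancel_left] at h4
    exact h4.symm
  have hax : a * x = x * a := hcomm x hx
  have hay : a * y = y * a := hcomm y hy
  suffices h : x * y = y * x by
    rw [mul_assoc, mul_assoc, h, inv_mul_cancel_left, inv_mul_cancel]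
  set H := Subgroup.closure ({x, y, a} : Set (FreeGroup X)) with hH
  have hxH : x ∈ H := Subgroup.subset_closure (by simp)
  have hyH : y ∈ H := Subgroup.subset_closure (by simp)
  have haH : a ∈ H := Subgroup.subset_closure (by simp)
  have hcentral : ∀ w : H, (⟨a, haH⟩ : H) * w = w * ⟨a, haH⟩ := by
    rintro ⟨w, hw⟩
    apply Subtype.ext
    show a * w = w * a
    refine Subgroup.closure_induction (p := fun g _ => a * g = g * a) ?_ ?_ ?_ ?_ hw
    · rintro g hg
      simp only [Set.mem_insert_iff, Set.mem_singleton_iff] at hg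
      rcases hg with rfl | rfl | rfl
      exacts [hax, hay, rfl]
    · simp
    · intro u v _ _ h1 h2
      rw [← mul_assoc, h1, mul_assoc, h2, mul_assoc]
    · intro u _ h1
      exact (Commute.inv_right h1 : _)
  let S := IsFreeGroup.Generators H
  let e : H ≃* FreeGroup S := IsFreeGroup.toFreeGroup H
  have hz : ∀ w : FreeGroup S, e ⟨a, haH⟩ * w = w * e ⟨a, haH⟩ := by
    intro w
    have h1 := congrArg e (hcentral (e.symm w))
    simpa using h1
  by_cases hS : ∃ s t : S, s ≠ t
  · obtain ⟨s, t, hst⟩ := hS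
    have h1 : e ⟨a, haH⟩ = 1 := eq_one_of_central hst hz
    have h2 : (⟨a, haH⟩ : H) = 1 := by
      apply e.injective; rw [h1, _root_.map_one]
    exact absurd (congrArg Subtype.val h2) ha
  · push_neg at hS
    haveI : Subsingleton S := ⟨hS⟩
    have h1 : e ⟨x, hxH⟩ * e ⟨y, hyH⟩ = e ⟨y, hyH⟩ * e ⟨x, hxH⟩ :=
      commute_of_subsingleton _ _
    have h2 : (⟨x, hxH⟩ : H) * ⟨y, hyH⟩ = ⟨y, hyH⟩ * ⟨x, hxH⟩ := by
      apply e.injective; rw [_root_.map_mul, _root_.map_mul, h1]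
    exact congrArg Subtype.val h2
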